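/- Let G be a graph with a 2-partition sequence (P_i)_{i∈[n]}, and suppose that for some m ∈ [n] there exist four parts X_1, X_2, X_3, X_4 ∈ P_m such that X_1X_2, X_2X_3 and X_3X_4 are red edges of G/P_m, X_1X_4 is not a red edge of G/P_m, and the induced subgraph G[X_1∪X_2∪X_3∪X_4] contains 3t−2 pairwise vertex-disjoint paths from X_1 to X_4. Then G contains a semi-induced biclique K_{t,t}, i.e., there exist disjoint sets A, B ⊆ V(G) with |A| = |B| = t such that every vertex of A is adjacent to every vertex of B. -/

import Mathlib

section PartitionSequences

variable {V : Type} [Fintype V] [DecidableEq V]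

/-- Two vertex sets are fully connected if every cross pair is an edge. -/
def FullyConn (G : SimpleGraph V) (P Q : Finset V) : Prop :=
  ∀ u ∈ P, ∀ v ∈ Q, G.Adj u v

/-- Two vertex sets are disconnected if no cross pair is an edge. -/
def NoConn (G : SimpleGraph V) (P Q : Finset V) : Prop :=
  ∀ u ∈ P, ∀ v ∈ Q, ¬ G.Adj u v

/-- Two (distinct) parts are joined by a red edge in the quotient trigraph iff they are
neither fully connected nor disconnected. -/
def RedEdge (G : SimpleGraph V) (P Q : Finset V) : Prop :=
  P ≠ Q ∧ ¬ FullyConn G P Q ∧ ¬ NoConn G P Q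

/-- The red degree of the part `P` in the quotient trigraph `G/Ps`. -/
noncomputable def redDegree (G : SimpleGraph V) (Ps : Finset (Finset V)) (P : Finset V) : ℕ :=
  Set.ncard {Q : Finset V | Q ∈ Ps ∧ RedEdge G P Q}

/-- `P` is obtained from `P'` by merging two distinct parts `A`, `B` into `A ∪ B`. -/
def IsMergeOf (P' P : Finset (Finset V)) : Prop :=
  ∃ A ∈ P', ∃ B ∈ P', A ≠ B ∧ P = (P' \ {A, B}) ∪ {A ∪ B}

/-- `Pseq n, Pseq (n-1), …, Pseq 1` (with `n = |V|`) is a partition sequence: `Pseq n` is the partition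
into singletons and each `Pseq i` is obtained from `Pseq (i+1)` by merging two parts. -/
def IsPartitionSeq (Pseq : ℕ → Finpartition (Finset.univ : Finset V)) : Prop :=
  (Pseq (Fintype.card V)).parts = Finset.univ.image (fun v => ({v} : Finset V)) ∧
  ∀ i, 1 ≤ i → i < Fintype.card V → IsMergeOf (Pseq (i + 1)).parts (Pseq i).parts

/-- The partition sequence `Pseq` has width at most `k`: every vertex of every quotient
trigraph `G/Pseq i` has red degree at most `k`. -/
def SeqWidthLE (G : SimpleGraph V) (Pseq : ℕ → Finpartition (Finset.univ : Finset V))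
    (k : ℕ) : Prop :=
  ∀ i, 1 ≤ i → i ≤ Fintype.card V → ∀ P ∈ (Pseq i).parts, redDegree G (Pseq i).parts P ≤ k

end PartitionSequences

/-- `G` contains a semi-induced biclique `K_{t,t}`: two disjoint sets of `t` vertices
each with every cross pair adjacent. -/
def HasKtt {V : Type} (G : SimpleGraph V) (t : ℕ) : Prop :=
  ∃ a b : Fin t → V,
    Function.Injective a ∧ Function.Injective b ∧ (∀ i j, a i ≠ b j) ∧
    ∀ i j, G.Adj (a i) (b j)

/-- The induced subgraph `G[X]` contains `m` pairwise vertex-disjoint paths from `A`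
to `B` (paths of `G` whose vertices all lie in `X`). -/
def HasDisjointPaths {V : Type} (G : SimpleGraph V) (X A B : Finset V) (m : ℕ) : Prop :=
  ∃ (u v : Fin m → V) (p : ∀ i, G.Walk (u i) (v i)),
    (∀ i, u i ∈ A) ∧ (∀ i, v i ∈ B) ∧
    (∀ i, (p i).IsPath) ∧
    (∀ i, ∀ x ∈ (p i).support, x ∈ X) ∧
    ∀ i j, i ≠ j → ∀ x ∈ (p i).support, x ∉ (p j).support

section Aux
variable {V : Type} [Fintype V] [DecidableEq V] {G : SimpleGraph V}

lemma fullyConn_comm {P Q : Finset V} (h : FullyConn G P Q) : FullyConn G Q P :=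
  fun u hu v hv => (h v hv u hu).symm

lemma noConn_comm {P Q : Finset V} (h : NoConn G P Q) : NoConn G Q P :=
  fun u hu v hv hadj => h v hv u hu hadj.symm

lemma redEdge_comm {P Q : Finset V} (h : RedEdge G P Q) : RedEdge G Q P :=
  ⟨h.1.symm, fun hf => h.2.1 (fullyConn_comm hf), fun hn => h.2.2 (noConn_comm hn)⟩

lemma fullyConn_mono {P Q P' Q' : Finset V} (h : FullyConn G P Q) (hP : P' ⊆ P) (hQ : Q' ⊆ Q) :
    FullyConn G P' Q' := fun u hu v hv => h u (hP hu) v (hQ hv)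

lemma noConn_mono {P Q P' Q' : Finset V} (h : NoConn G P Q) (hP : P' ⊆ P) (hQ : Q' ⊆ Q) :
    NoConn G P' Q' := fun u hu v hv => h u (hP hu) v (hQ hv)

lemma fullyConn_union_left {P Q R : Finset V} (h1 : FullyConn G P R) (h2 : FullyConn G Q R) :
    FullyConn G (P ∪ Q) R := by
  intro u hu v hv
  rcases Finset.mem_union.mp hu with h | h
  · exact h1 u h v hv
  · exact h2 u h v hv

lemma noConn_union_left {P Q R : Finset V} (h1 : NoConn G P R) (h2 : NoConn G Q R) :
    NoConn G (P ∪ Q) R := by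
  intro u hu v hv
  rcases Finset.mem_union.mp hu with h | h
  · exact h1 u h v hv
  · exact h2 u h v hv

lemma fullyConn_empty {Q : Finset V} : FullyConn G ∅ Q := by intro u hu; simp at hu

/-- trichotomy -/
lemma rel_cases {P Q : Finset V} (hne : P ≠ Q) :
    RedEdge G P Q ∨ FullyConn G P Q ∨ NoConn G P Q := by
  by_cases hF : FullyConn G P Q
  · exact Or.inr (Or.inl hF)
  by_cases hN : NoConn G P Q
  · exact Or.inr (Or.inr hN)
  exact Or.inl ⟨hne, hF, hN⟩

lemma not_red_cases {P Q : Finset V} (hne : P ≠ Q) (h : ¬ RedEdge G P Q) :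
    FullyConn G P Q ∨ NoConn G P Q := by
  rcases rel_cases (G := G) hne with h' | h' | h'
  · exact absurd h' h
  · exact Or.inl h'
  · exact Or.inr h'

lemma ne_of_disjoint {P Q : Finset V} (h : Disjoint P Q) (hP : P.Nonempty) : P ≠ Q := by
  rintro rfl
  exact hP.ne_empty (disjoint_self.mp h)

/-- three distinct red neighbours contradict red degree ≤ 2 -/
lemma not_three_red {Ps : Finset (Finset V)} {P Q1 Q2 Q3 : Finset V}
    (h1 : Q1 ∈ Ps) (h2 : Q2 ∈ Ps) (h3 : Q3 ∈ Ps)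
    (h12 : Q1 ≠ Q2) (h13 : Q1 ≠ Q3) (h23 : Q2 ≠ Q3)
    (hr1 : RedEdge G P Q1) (hr2 : RedEdge G P Q2) (hr3 : RedEdge G P Q3)
    (hdeg : redDegree G Ps P ≤ 2) : False := by
  have hsub : ({Q1, Q2, Q3} : Set (Finset V)) ⊆ {Q : Finset V | Q ∈ Ps ∧ RedEdge G P Q} := by
    intro Q hQ
    simp only [Set.mem_insert_iff, Set.mem_singleton_iff] at hQ
    rcases hQ with rfl | rfl | rfl
    · exact ⟨h1, hr1⟩
    · exact ⟨h2, hr2⟩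
    · exact ⟨h3, hr3⟩
  have hc : ({Q1, Q2, Q3} : Set (Finset V)).ncard = 3 := by
    rw [Set.ncard_insert_of_notMem (by simp [h12, h13]) (Set.toFinite _), Set.ncard_pair h23]
  have := Set.ncard_le_ncard hsub (Set.toFinite _)
  rw [hc] at this
  exact absurd (this.trans hdeg) (by norm_num)

/-- the fire lemma : a fully connected pair of large disjoint sets gives a biclique -/
lemma hasKtt_of_fullyConn {P Q : Finset V} {t : ℕ} (h : FullyConn G P Q)
    (hd : Disjoint P Q) (hP : t ≤ P.card) (hQ : t ≤ Q.card) : HasKtt G t := by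
  obtain ⟨P', hP'sub, hP'⟩ := Finset.exists_subset_card_eq hP
  obtain ⟨Q', hQ'sub, hQ'⟩ := Finset.exists_subset_card_eq hQ
  have fa : Fin t → {x // x ∈ P'} := fun i => P'.equivFin.symm ⟨i.1, hP' ▸ i.2⟩
  have fb : Fin t → {x // x ∈ Q'} := fun i => Q'.equivFin.symm ⟨i.1, hQ' ▸ i.2⟩
  refine ⟨fun i => (P'.equivFin.symm ⟨i.1, hP' ▸ i.2⟩).1,
          fun i => (Q'.equivFin.symm ⟨i.1, hQ' ▸ i.2⟩).1, ?_, ?_, ?_, ?_⟩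
  · intro i j hij
    have h2 := P'.equivFin.symm.injective (Subtype.ext hij)
    have h3 := congrArg Fin.val h2
    exact Fin.ext h3
  · intro i j hij
    have h2 := Q'.equivFin.symm.injective (Subtype.ext hij)
    have h3 := congrArg Fin.val h2
    exact Fin.ext h3
  · intro i j heq
    have hi : ((P'.equivFin.symm ⟨i.1, hP' ▸ i.2⟩ : {x // x ∈ P'}) : V) ∈ P :=
      hP'sub (P'.equivFin.symm _).2
    have hj : ((Q'.equivFin.symm ⟨j.1, hQ' ▸ j.2⟩ : {x // x ∈ Q'}) : V) ∈ Q :=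
      hQ'sub (Q'.equivFin.symm _).2
    simp only [] at heq
    rw [heq] at hi
    exact Finset.disjoint_left.mp hd hi hj
  · intro i j
    exact h _ (hP'sub (P'.equivFin.symm _).2) _ (hQ'sub (Q'.equivFin.symm _).2)

/-! ### list splitting lemmas -/

variable {α : Type*}

lemma last_split (p : α → Prop) [DecidablePred p] :
    ∀ (L : List α), (∃ x ∈ L, p x) →
      ∃ s' M, p s' ∧ (∀ x ∈ M, x ∈ L ∧ ¬ p x) ∧ (s' :: M) <:+ L := by
  intro L
  induction L with
  | nil => rintro ⟨x, hx, -⟩; simp at hx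
  | cons a T ih =>
    intro hex
    by_cases hT : ∃ x ∈ T, p x
    · obtain ⟨s', M, hs', hM, hsuf⟩ := ih hT
      exact ⟨s', M, hs', fun x hx => ⟨List.mem_cons_of_mem _ (hM x hx).1, (hM x hx).2⟩,
        hsuf.trans (List.suffix_cons a T)⟩
    · push_neg at hT
      have hpa : p a := by
        obtain ⟨x, hx, hpx⟩ := hex
        rcases List.mem_cons.mp hx with rfl | hx'
        · exact hpx
        · exact absurd hpx (hT x hx')
      exact ⟨a, T, hpa, fun x hx => ⟨List.mem_cons_of_mem _ hx, hT x hx⟩, List.suffix_refl _⟩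

lemma first_split (p : α → Prop) [DecidablePred p] :
    ∀ (M : List α), (∃ x ∈ M, p x) →
      ∃ Pr e', p e' ∧ e' ∈ M ∧ (∀ x ∈ Pr, x ∈ M ∧ ¬ p x) ∧ (Pr ++ [e']) <+: M := by
  intro M
  induction M with
  | nil => rintro ⟨x, hx, -⟩; simp at hx
  | cons a T ih =>
    intro hex
    by_cases hpa : p a
    · exact ⟨[], a, hpa, List.mem_cons_self, by simp, ⟨T, by simp⟩⟩
    · have hT : ∃ x ∈ T, p x := by
        obtain ⟨x, hx, hpx⟩ := hex
        rcases List.mem_cons.mp hx with rfl | hx'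
        · exact absurd hpx hpa
        · exact ⟨x, hx', hpx⟩
      obtain ⟨Pr, e', he', hemem, hPr, hpre⟩ := ih hT
      obtain ⟨r, hr⟩ := hpre
      refine ⟨a :: Pr, e', he', List.mem_cons_of_mem _ hemem, ?_, ⟨r, by simp [hr]⟩⟩
      intro x hx
      rcases List.mem_cons.mp hx with rfl | hx'
      · exact ⟨List.mem_cons_self, hpa⟩
      · exact ⟨List.mem_cons_of_mem _ (hPr x hx').1, (hPr x hx').2⟩

lemma last_split_concat (p : α → Prop) [DecidablePred p] (e : α) :
    ∀ (mid : List α), (∃ x ∈ mid, p x) →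
      ∃ b M, p b ∧ b ∈ mid ∧ (∀ x ∈ M, x ∈ mid ∧ ¬ p x) ∧ (b :: (M ++ [e])) <:+ (mid ++ [e]) := by
  intro mid
  induction mid with
  | nil => rintro ⟨x, hx, -⟩; simp at hx
  | cons a T ih =>
    intro hex
    by_cases hT : ∃ x ∈ T, p x
    · obtain ⟨b, M, hb, hbmem, hM, hsuf⟩ := ih hT
      refine ⟨b, M, hb, List.mem_cons_of_mem _ hbmem,
        fun x hx => ⟨List.mem_cons_of_mem _ (hM x hx).1, (hM x hx).2⟩, ?_⟩
      exact hsuf.trans (by simpa using List.suffix_cons a (T ++ [e]))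
    · push_neg at hT
      have hpa : p a := by
        obtain ⟨x, hx, hpx⟩ := hex
        rcases List.mem_cons.mp hx with rfl | hx'
        · exact hpx
        · exact absurd hpx (hT x hx')
      exact ⟨a, T, hpa, List.mem_cons_self,
        fun x hx => ⟨List.mem_cons_of_mem _ hx, hT x hx⟩, by simp⟩

lemma getLast_of_suffix {l L : List α} (h : l <:+ L) (hl : l ≠ []) (hL : L ≠ []) :
    l.getLast hl = L.getLast hL := by
  obtain ⟨w, rfl⟩ := h
  rw [List.getLast_append]
  simp [hl]

/-- predecessor of the first element satisfying `p` -/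
lemma chain_first_pred {R : α → α → Prop} (p : α → Prop) [DecidablePred p] :
    ∀ (L : List α), L.Chain' R → (∃ x ∈ L, p x) → (∀ h : L ≠ [], ¬ p (L.head h)) →
      ∃ y z, ¬ p y ∧ p z ∧ R y z ∧ y ∈ L.dropLast ∧ z ∈ L := by
  intro L
  induction L with
  | nil => rintro - ⟨x, hx, -⟩; simp at hx
  | cons a T ih =>
    intro hch hex hhead
    have hpa : ¬ p a := hhead (by simp)
    have hT : ∃ x ∈ T, p x := by
      obtain ⟨x, hx, hpx⟩ := hex
      rcases List.mem_cons.mp hx with rfl | hx'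
      · exact absurd hpx hpa
      · exact ⟨x, hx', hpx⟩
    have hTne : T ≠ [] := by rintro rfl; obtain ⟨x, hx, -⟩ := hT; simp at hx
    by_cases hph : p (T.head hTne)
    · refine ⟨a, T.head hTne, hpa, hph, ?_, ?_, List.mem_cons_of_mem _ (List.head_mem hTne)⟩
      · have := hch
        rw [← List.cons_head_tail hTne, List.Chain', List.isChain_cons_cons] at this
        exact this.1
      · rw [List.dropLast_cons_of_ne_nil hTne]
        exact List.mem_cons_self
    · obtain ⟨y, z, hy, hz, hR, hymem, hzmem⟩ := ih hch.tail hT (fun _ => hph)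
      refine ⟨y, z, hy, hz, hR, ?_, List.mem_cons_of_mem _ hzmem⟩
      rw [List.dropLast_cons_of_ne_nil hTne]
      exact List.mem_cons_of_mem _ hymem

/-- successor of the last element satisfying `p` -/
lemma chain_last_succ {R : α → α → Prop} (p : α → Prop) [DecidablePred p] :
    ∀ (L : List α), L.Chain' R → (∃ x ∈ L, p x) → (∀ h : L ≠ [], ¬ p (L.getLast h)) →
      ∃ y z, p y ∧ ¬ p z ∧ R y z ∧ y ∈ L ∧ z ∈ L.tail := by
  intro L
  induction L with
  | nil => rintro - ⟨x, hx, -⟩; simp at hx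
  | cons a T ih =>
    intro hch hex hlast
    by_cases hT : ∃ x ∈ T, p x
    · have hTne : T ≠ [] := by rintro rfl; obtain ⟨x, hx, -⟩ := hT; simp at hx
      obtain ⟨y, z, hy, hz, hR, hymem, hzmem⟩ := ih hch.tail hT
        (fun h => by
          have := hlast (by simp)
          rwa [List.getLast_cons hTne] at this)
      refine ⟨y, z, hy, hz, hR, List.mem_cons_of_mem _ hymem, ?_⟩
      simp only [List.tail_cons]
      exact (List.tail_subset T) hzmem
    · push_neg at hT
      have hpa : p a := by
        obtain ⟨x, hx, hpx⟩ := hex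
        rcases List.mem_cons.mp hx with rfl | hx'
        · exact hpx
        · exact absurd hpx (hT x hx')
      have hTne : T ≠ [] := by
        rintro rfl
        exact hlast (by simp) (by simpa using hpa)
      refine ⟨a, T.head hTne, hpa, hT _ (List.head_mem hTne), ?_, List.mem_cons_self, ?_⟩
      · have := hch
        rw [← List.cons_head_tail hTne, List.Chain', List.isChain_cons_cons] at this
        exact this.1
      · simp only [List.tail_cons]
        exact List.head_mem hTne

end Aux

section Paths
variable {V : Type} [Fintype V] [DecidableEq V] {G : SimpleGraph V}

/-- `k` disjoint paths from `W0` to `W3` whose interiors lie in `W1 ∪ W2`,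
meeting `W0` only at the start and `W3` only at the end. -/
def PathsOf (G : SimpleGraph V) (W0 W1 W2 W3 : Finset V) (k : ℕ) : Prop :=
  ∃ s e : Fin k → V, ∃ mid : Fin k → List V,
    (∀ i, s i ∈ W0) ∧ (∀ i, e i ∈ W3) ∧ (∀ i, mid i ≠ []) ∧
    (∀ i, ∀ x ∈ mid i, x ∈ W1 ∨ x ∈ W2) ∧
    (∀ i, List.Chain' G.Adj (s i :: (mid i ++ [e i]))) ∧
    (∀ i j, i ≠ j → ∀ x ∈ s i :: (mid i ++ [e i]), x ∉ s j :: (mid j ++ [e j]))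

variable {k : ℕ} {W0 W1 W2 W3 : Finset V} {s e : Fin k → V} {mid : Fin k → List V}

lemma card_le_of_mem_inj {W : Finset V} (f : Fin k → V) (hmem : ∀ i, f i ∈ W)
    (hinj : Function.Injective f) : k ≤ W.card := by
  have h2 : (Finset.univ : Finset (Fin k)).card ≤ W.card :=
    Finset.card_le_card_of_injOn f (fun a _ => hmem a) hinj.injOn
  simpa using h2

lemma inj_of_disj
    (hdis : ∀ i j, i ≠ j → ∀ x ∈ s i :: (mid i ++ [e i]), x ∉ s j :: (mid j ++ [e j]))
    (f : Fin k → V) (hf : ∀ i, f i ∈ s i :: (mid i ++ [e i])) : Function.Injective f := by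
  intro i j hij
  by_contra hne
  exact hdis i j hne (f i) (hf i) (hij ▸ hf j)

lemma adj_head (hne : ∀ i, mid i ≠ [])
    (hch : ∀ i, List.Chain' G.Adj (s i :: (mid i ++ [e i]))) (i : Fin k) :
    G.Adj (s i) ((mid i).head (hne i)) := by
  have hrw : mid i ++ [e i] = (mid i).head (hne i) :: ((mid i).tail ++ [e i]) := by
    rw [← List.cons_append, List.cons_head_tail]
  have := hch i
  rw [hrw, List.Chain', List.isChain_cons_cons] at this
  exact this.1

lemma adj_last (hne : ∀ i, mid i ≠ [])
    (hch : ∀ i, List.Chain' G.Adj (s i :: (mid i ++ [e i]))) (i : Fin k) :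
    G.Adj ((mid i).getLast (hne i)) (e i) := by
  have h1 : List.Chain' G.Adj (mid i ++ [e i]) := (hch i).tail
  rw [List.Chain', List.isChain_append] at h1
  exact h1.2.2 _ (by rw [List.getLast?_eq_getLast (hne i)]; rfl) (e i) rfl

lemma head_mem_W1 (hs : ∀ i, s i ∈ W0) (hne : ∀ i, mid i ≠ [])
    (hmid : ∀ i, ∀ x ∈ mid i, x ∈ W1 ∨ x ∈ W2)
    (hch : ∀ i, List.Chain' G.Adj (s i :: (mid i ++ [e i])))
    (hn02 : NoConn G W0 W2) (i : Fin k) : (mid i).head (hne i) ∈ W1 := by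
  rcases hmid i _ (List.head_mem (hne i)) with h | h
  · exact h
  · exact absurd (adj_head hne hch i) (hn02 _ (hs i) _ h)

lemma last_mem_W2 (he : ∀ i, e i ∈ W3) (hne : ∀ i, mid i ≠ [])
    (hmid : ∀ i, ∀ x ∈ mid i, x ∈ W1 ∨ x ∈ W2)
    (hch : ∀ i, List.Chain' G.Adj (s i :: (mid i ++ [e i])))
    (hn13 : NoConn G W1 W3) (i : Fin k) : (mid i).getLast (hne i) ∈ W2 := by
  rcases hmid i _ (List.getLast_mem (hne i)) with h | h
  · exact absurd (adj_last hne hch i) (hn13 _ h _ (he i))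
  · exact h

/-- number of paths touching a set `B` is at most `|B|`. -/
lemma touched_card
    (hdis : ∀ i j, i ≠ j → ∀ x ∈ s i :: (mid i ++ [e i]), x ∉ s j :: (mid j ++ [e j]))
    (B : Finset V) :
    (Finset.univ.filter (fun i => ∃ x ∈ s i :: (mid i ++ [e i]), x ∈ B)).card ≤ B.card := by
  classical
  set f : Fin k → V := fun i =>
    if h : ∃ x ∈ s i :: (mid i ++ [e i]), x ∈ B then h.choose else s i with hf
  apply Finset.card_le_card_of_injOn f
  · intro i hi
    simp only [Finset.mem_coe, Finset.mem_filter] at hi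
    simp only [hf, dif_pos hi.2]
    exact hi.2.choose_spec.2
  · intro i hi j hj hij
    simp only [Finset.mem_coe, Finset.mem_filter] at hi hj
    by_contra hne
    have hfi : f i ∈ s i :: (mid i ++ [e i]) := by
      simp only [hf, dif_pos hi.2]; exact hi.2.choose_spec.1
    have hfj : f j ∈ s j :: (mid j ++ [e j]) := by
      simp only [hf, dif_pos hj.2]; exact hj.2.choose_spec.1
    exact hdis i j hne (f i) hfi (hij ▸ hfj)

lemma untouched_count
    (hdis : ∀ i j, i ≠ j → ∀ x ∈ s i :: (mid i ++ [e i]), x ∉ s j :: (mid j ++ [e j]))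
    (B : Finset V) :
    k ≤ (Finset.univ.filter
      (fun i => ∀ x ∈ s i :: (mid i ++ [e i]), x ∉ B)).card + B.card := by
  classical
  have h1 := Finset.card_filter_add_card_filter_not
    (s := (Finset.univ : Finset (Fin k)))
    (p := fun i => ∀ x ∈ s i :: (mid i ++ [e i]), x ∉ B)
  have h2 : (Finset.univ.filter
      (fun i => ¬ ∀ x ∈ s i :: (mid i ++ [e i]), x ∉ B)).card ≤ B.card := by
    have h3 : (Finset.univ.filter
        (fun i => ¬ ∀ x ∈ s i :: (mid i ++ [e i]), x ∉ B)) =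
        (Finset.univ.filter (fun i => ∃ x ∈ s i :: (mid i ++ [e i]), x ∈ B)) := by
      apply Finset.filter_congr
      intro i _
      constructor
      · intro h; push_neg at h; exact h
      · intro h; push_neg; exact h
    rw [h3]
    exact touched_card hdis B
  simp only [Finset.card_univ, Fintype.card_fin] at h1
  omega

/-- restrict the family of paths to an index set, possibly shrinking the target sets. -/
lemma pathsOf_filter
    (hs : ∀ i, s i ∈ W0) (he : ∀ i, e i ∈ W3) (hne : ∀ i, mid i ≠ [])
    (hch : ∀ i, List.Chain' G.Adj (s i :: (mid i ++ [e i])))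
    (hdis : ∀ i j, i ≠ j → ∀ x ∈ s i :: (mid i ++ [e i]), x ∉ s j :: (mid j ++ [e j]))
    (I : Finset (Fin k)) {W0' W1' W2' : Finset V}
    (hs' : ∀ i ∈ I, s i ∈ W0')
    (hmid' : ∀ i ∈ I, ∀ x ∈ mid i, x ∈ W1' ∨ x ∈ W2') :
    PathsOf G W0' W1' W2' W3 I.card := by
  classical
  set f := I.orderEmbOfFin rfl with hfdef
  have hfmem : ∀ j, f j ∈ I := fun j => Finset.orderEmbOfFin_mem I rfl j
  refine ⟨fun j => s (f j), fun j => e (f j), fun j => mid (f j), ?_, ?_, ?_, ?_, ?_, ?_⟩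
  · exact fun j => hs' _ (hfmem j)
  · exact fun j => he (f j)
  · exact fun j => hne (f j)
  · exact fun j => hmid' _ (hfmem j)
  · exact fun j => hch (f j)
  · intro i j hij
    exact hdis (f i) (f j) (fun hc => hij (f.injective hc))

lemma pathsOf_mono {W0' W1' W2' W3' : Finset V} (h : PathsOf G W0 W1 W2 W3 k)
    (h0 : W0 ⊆ W0') (h1 : W1 ⊆ W1') (h2 : W2 ⊆ W2') (h3 : W3 ⊆ W3') :
    PathsOf G W0' W1' W2' W3' k := by
  obtain ⟨s, e, mid, hs, he, hne, hmid, hch, hdis⟩ := h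
  exact ⟨s, e, mid, fun i => h0 (hs i), fun i => h3 (he i), hne,
    fun i x hx => (hmid i x hx).imp (@h1 x) (@h2 x), hch, hdis⟩

lemma pathsOf_reverse (h : PathsOf G W0 W1 W2 W3 k) : PathsOf G W3 W2 W1 W0 k := by
  obtain ⟨s, e, mid, hs, he, hne, hmid, hch, hdis⟩ := h
  have hrev : ∀ i, (s i :: (mid i ++ [e i])).reverse = e i :: ((mid i).reverse ++ [s i]) := by
    intro i; simp
  refine ⟨e, s, fun i => (mid i).reverse, he, hs, by simp [hne], ?_, ?_, ?_⟩
  · intro i x hx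
    exact (hmid i x (List.mem_reverse.mp hx)).symm
  · intro i
    have := hch i
    have h2 : List.Chain' G.Adj ((s i :: (mid i ++ [e i])).reverse) := by
      rw [List.Chain', List.isChain_reverse]
      have hflip : (flip G.Adj) = G.Adj := by
        funext a b; simp [flip, SimpleGraph.adj_comm]
      rw [show (fun a b => G.Adj b a) = G.Adj from hflip]; exact this
    rwa [hrev i] at h2
  · intro i j hij x hx hx'
    rw [← hrev i] at hx
    rw [← hrev j] at hx'
    exact hdis i j hij x (List.mem_reverse.mp hx) (List.mem_reverse.mp hx')

end Paths


section Conf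
variable {V : Type} [Fintype V] [DecidableEq V] {G : SimpleGraph V}

lemma mem_of_getLast?' {α : Type*} {l : List α} {a : α} (h : l.getLast? = some a) : a ∈ l := by
  have h1 : a ∈ l.reverse.head? := by rw [List.head?_reverse]; simp [h]
  exact List.mem_reverse.mp (List.mem_of_mem_head? h1)

variable {k : ℕ} {W0 W1 W2 W3 : Finset V} {s e : Fin k → V} {mid : Fin k → List V}

/-- replace each path by its suffix starting at its last vertex in `B`. -/
lemma pathsOf_truncate {A B : Finset V}
    (hs : ∀ i, s i ∈ W0) (he : ∀ i, e i ∈ W3) (hne : ∀ i, mid i ≠ [])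
    (hmid : ∀ i, ∀ x ∈ mid i, x ∈ W1 ∨ x ∈ W2)
    (hch : ∀ i, List.Chain' G.Adj (s i :: (mid i ++ [e i])))
    (hdis : ∀ i j, i ≠ j → ∀ x ∈ s i :: (mid i ++ [e i]), x ∉ s j :: (mid j ++ [e j]))
    (hW1 : W1 = A ∪ B)
    (htouch : ∀ i, ∃ x ∈ s i :: (mid i ++ [e i]), x ∈ B)
    (hnBW3 : NoConn G B W3)
    (hdW0B : Disjoint W0 B) (hdW3B : Disjoint W3 B) :
    PathsOf G B A W2 W3 k := by
  classical
  have H : ∀ i, ∃ b M, b ∈ B ∧ M ≠ [] ∧ (∀ x ∈ M, x ∈ A ∨ x ∈ W2) ∧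
      List.Chain' G.Adj (b :: (M ++ [e i])) ∧
      (∀ x ∈ b :: (M ++ [e i]), x ∈ s i :: (mid i ++ [e i])) := by
    intro i
    have hex : ∃ x ∈ mid i, x ∈ B := by
      obtain ⟨x, hx, hxB⟩ := htouch i
      rcases List.mem_cons.mp hx with rfl | hx'
      · exact absurd hxB (Finset.disjoint_left.mp hdW0B (hs i))
      rcases List.mem_append.mp hx' with h | h
      · exact ⟨x, h, hxB⟩
      · simp only [List.mem_singleton] at h
        subst h
        exact absurd hxB (Finset.disjoint_left.mp hdW3B (he i))
    obtain ⟨b, M, hb, hbmem, hM, hsuf⟩ := last_split_concat (fun x => x ∈ B) (e i) (mid i) hex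
    have hchain : List.Chain' G.Adj (b :: (M ++ [e i])) := by
      have h1 : List.Chain' G.Adj (mid i ++ [e i]) := (hch i).tail
      exact h1.suffix hsuf
    have hMne : M ≠ [] := by
      rintro rfl
      simp only [List.nil_append] at hchain
      rw [List.Chain', List.isChain_cons_cons] at hchain
      exact hnBW3 b hb (e i) (he i) hchain.1
    refine ⟨b, M, hb, hMne, ?_, hchain, ?_⟩
    · intro x hx
      obtain ⟨hxmid, hxB⟩ := hM x hx
      rcases hmid i x hxmid with h | h
      · rw [hW1] at h
        rcases Finset.mem_union.mp h with h' | h'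
        · exact Or.inl h'
        · exact absurd h' hxB
      · exact Or.inr h
    · intro x hx
      rcases List.mem_cons.mp hx with rfl | hx'
      · exact List.mem_cons_of_mem _ (List.mem_append_left _ hbmem)
      rcases List.mem_append.mp hx' with h | h
      · exact List.mem_cons_of_mem _ (List.mem_append_left _ (hM x h).1)
      · exact List.mem_cons_of_mem _ (List.mem_append_right _ h)
  choose b M hb hMne hMmem hchain hsub using H
  refine ⟨b, e, M, hb, he, hMne, hMmem, hchain, ?_⟩
  intro i j hij x hx hx'
  exact hdis i j hij x (hsub i x hx) (hsub j x hx')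

end Conf

section ConfDef
variable {V : Type} [Fintype V] [DecidableEq V] {G : SimpleGraph V}

/-- The inductive configuration: a red path `W0 W1 W2 W3` whose non-consecutive pairs are
disconnected, reservoirs `S1, S2` fully connected to `W1, W2`, and many disjoint paths. -/
def Conf (G : SimpleGraph V) (t : ℕ) (Ps : Finset (Finset V)) : Prop :=
  ∃ W0 W1 W2 W3 S1 S2 : Finset V, ∃ k : ℕ,
    W0 ∈ Ps ∧ W1 ∈ Ps ∧ W2 ∈ Ps ∧ W3 ∈ Ps ∧
    (W0 ≠ W1 ∧ W0 ≠ W2 ∧ W0 ≠ W3 ∧ W1 ≠ W2 ∧ W1 ≠ W3 ∧ W2 ≠ W3) ∧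
    RedEdge G W0 W1 ∧ RedEdge G W1 W2 ∧ RedEdge G W2 W3 ∧
    NoConn G W0 W2 ∧ NoConn G W0 W3 ∧ NoConn G W1 W3 ∧
    FullyConn G S1 W1 ∧ FullyConn G S2 W2 ∧
    Disjoint S1 S2 ∧
    (Disjoint S1 W0 ∧ Disjoint S1 W1 ∧ Disjoint S1 W2 ∧ Disjoint S1 W3) ∧
    (Disjoint S2 W0 ∧ Disjoint S2 W1 ∧ Disjoint S2 W2 ∧ Disjoint S2 W3) ∧
    S1.card < t ∧ S2.card < t ∧
    3 * t ≤ k + S1.card + S2.card + 2 ∧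
    PathsOf G W0 W1 W2 W3 k

lemma conf_base (t : ℕ) (ht : 2 ≤ t) {Ps : Finset (Finset V)}
    (hpd : (↑Ps : Set (Finset V)).PairwiseDisjoint id)
    {X1 X2 X3 X4 : Finset V}
    (h1 : X1 ∈ Ps) (h2 : X2 ∈ Ps) (h3 : X3 ∈ Ps) (h4 : X4 ∈ Ps)
    (h12 : X1 ≠ X2) (h13 : X1 ≠ X3) (h14 : X1 ≠ X4)
    (h23 : X2 ≠ X3) (h24 : X2 ≠ X4) (h34 : X3 ≠ X4)
    (hr12 : RedEdge G X1 X2) (hr23 : RedEdge G X2 X3) (hr34 : RedEdge G X3 X4)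
    (hnr14 : ¬ RedEdge G X1 X4)
    (hw : ∀ P ∈ Ps, redDegree G Ps P ≤ 2)
    (hpaths : HasDisjointPaths G (X1 ∪ X2 ∪ X3 ∪ X4) X1 X4 (3 * t - 2)) :
    HasKtt G t ∨ Conf G t Ps := by
  classical
  obtain ⟨u, v, p, hu, hv, hip, hsupX, hdis⟩ := hpaths
  have hd : ∀ {P Q : Finset V}, P ∈ Ps → Q ∈ Ps → P ≠ Q → Disjoint P Q :=
    fun hP hQ hne => hpd hP hQ hne
  have hkt : t ≤ 3 * t - 2 := by omega
  have huinj : Function.Injective u := by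
    intro i j hij
    by_contra hne
    exact hdis i j hne (u i) ((p i).start_mem_support)
      (by rw [hij]; exact (p j).start_mem_support)
  have hvinj : Function.Injective v := by
    intro i j hij
    by_contra hne
    exact hdis i j hne (v i) ((p i).end_mem_support)
      (by rw [hij]; exact (p j).end_mem_support)
  have hX1c : 3 * t - 2 ≤ X1.card := card_le_of_mem_inj u hu huinj
  have hX4c : 3 * t - 2 ≤ X4.card := card_le_of_mem_inj v hv hvinj
  have hnr13 : ¬ RedEdge G X1 X3 := fun hr =>
    not_three_red h2 h4 h1 h24 (Ne.symm h12) (Ne.symm h14)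
      (redEdge_comm hr23) hr34 (redEdge_comm hr) (hw X3 h3)
  have hnr24 : ¬ RedEdge G X2 X4 := fun hr =>
    not_three_red h1 h3 h4 h13 h14 h34
      (redEdge_comm hr12) hr23 hr (hw X2 h2)
  rcases not_red_cases h14 hnr14 with hF14 | hN14
  · exact Or.inl (hasKtt_of_fullyConn hF14 (hd h1 h4 h14) (hkt.trans hX1c) (hkt.trans hX4c))
  -- now X1, X4 are disconnected; normalize the paths
  have H : ∀ i, ∃ s' mid' e', s' ∈ X1 ∧ e' ∈ X4 ∧ mid' ≠ [] ∧
      (∀ x ∈ mid', x ∈ X2 ∨ x ∈ X3) ∧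
      List.Chain' G.Adj (s' :: (mid' ++ [e'])) ∧
      (∀ x ∈ s' :: (mid' ++ [e']), x ∈ (p i).support) := by
    intro i
    set L := (p i).support with hL
    have hchL : List.Chain' G.Adj L := (p i).isChain_adj_support
    obtain ⟨s', M, hs'X1, hM, hsuf⟩ :=
      last_split (fun x => x ∈ X1) L ⟨u i, (p i).start_mem_support, hu i⟩
    have hLlast : L.getLast? = some (v i) := by
      rw [← List.head?_reverse, hL, ← SimpleGraph.Walk.support_reverse,
        SimpleGraph.Walk.support_eq_cons]
      rfl
    have hgl : (s' :: M).getLast? = some (v i) := by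
      obtain ⟨w, hw⟩ := hsuf
      rw [← hw, List.getLast?_append] at hLlast
      cases hgl2 : (s' :: M).getLast? with
      | none => simp at hgl2
      | some a => rw [hgl2] at hLlast; simpa using hLlast
    have hvM : v i ∈ M := by
      rcases List.mem_cons.mp (mem_of_getLast?' hgl) with heq | h
      · exfalso
        have : s' ∈ X4 := heq ▸ hv i
        exact Finset.disjoint_left.mp (hd h1 h4 h14) hs'X1 this
      · exact h
    obtain ⟨Pr, e', he'X4, he'M, hPr, hpre⟩ :=
      first_split (fun x => x ∈ X4) M ⟨v i, hvM, hv i⟩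
    have hpre2 : (s' :: (Pr ++ [e'])) <+: (s' :: M) := by
      obtain ⟨r, hr⟩ := hpre
      exact ⟨r, by simp [hr]⟩
    have hchain : List.Chain' G.Adj (s' :: (Pr ++ [e'])) :=
      (hchL.suffix hsuf).prefix hpre2
    have hsubL : ∀ x ∈ s' :: (Pr ++ [e']), x ∈ L := by
      intro x hx
      rcases List.mem_cons.mp hx with rfl | hx'
      · exact hsuf.subset (List.mem_cons_self)
      rcases List.mem_append.mp hx' with h | h
      · exact hsuf.subset (List.mem_cons_of_mem _ (hPr x h).1)
      · simp only [List.mem_singleton] at h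
        subst h
        exact hsuf.subset (List.mem_cons_of_mem _ he'M)
    have hmidmem : ∀ x ∈ Pr, x ∈ X2 ∨ x ∈ X3 := by
      intro x hx
      obtain ⟨hxM, hxX4⟩ := hPr x hx
      obtain ⟨hxL, hxX1⟩ := hM x hxM
      have := hsupX i x hxL
      rcases Finset.mem_union.mp this with h | h
      · rcases Finset.mem_union.mp h with h' | h'
        · rcases Finset.mem_union.mp h' with h'' | h''
          · exact absurd h'' hxX1
          · exact Or.inl h''
        · exact Or.inr h'
      · exact absurd h hxX4
    have hPrne : Pr ≠ [] := by
      rintro rfl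
      simp only [List.nil_append] at hchain
      rw [List.Chain', List.isChain_cons_cons] at hchain
      exact hN14 s' hs'X1 e' he'X4 hchain.1
    exact ⟨s', Pr, e', hs'X1, he'X4, hPrne, hmidmem, hchain, hsubL⟩
  choose sf midf ef hsf hef hnef hmidf hchf hsubf using H
  have hdisf : ∀ i j, i ≠ j → ∀ x ∈ sf i :: (midf i ++ [ef i]),
      x ∉ sf j :: (midf j ++ [ef j]) := by
    intro i j hij x hx hx'
    exact hdis i j hij x (hsubf i x hx) (hsubf j x hx')
  have hpathsN : PathsOf G X1 X2 X3 X4 (3 * t - 2) :=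
    ⟨sf, ef, midf, hsf, hef, hnef, hmidf, hchf, hdisf⟩
  rcases not_red_cases h13 hnr13 with hF13 | hN13
  · -- X1 fully connected to X3
    rcases not_red_cases h24 hnr24 with hF24 | hN24
    · -- both full : one of X2, X3 is large
      have hheadinj : Function.Injective (fun i => (midf i).head (hnef i)) := by
        apply inj_of_disj hdisf
        intro i
        exact List.mem_cons_of_mem _ (List.mem_append_left _ (List.head_mem (hnef i)))
      have h23c : 3 * t - 2 ≤ (X2 ∪ X3).card := by
        apply card_le_of_mem_inj _ _ hheadinj
        intro i
        rcases hmidf i _ (List.head_mem (hnef i)) with h | h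
        · exact Finset.mem_union_left _ h
        · exact Finset.mem_union_right _ h
      rw [Finset.card_union_of_disjoint (hd h2 h3 h23)] at h23c
      by_cases hbig2 : t ≤ X2.card
      · exact Or.inl (hasKtt_of_fullyConn hF24 (hd h2 h4 h24) hbig2 (hkt.trans hX4c))
      · have hbig3 : t ≤ X3.card := by omega
        exact Or.inl (hasKtt_of_fullyConn hF13 (hd h1 h3 h13) (hkt.trans hX1c) hbig3)
    · -- X2, X4 disconnected : every path's last mid vertex is in X3
      have hlastinj : Function.Injective (fun i => (midf i).getLast (hnef i)) := by
        apply inj_of_disj hdisf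
        intro i
        exact List.mem_cons_of_mem _ (List.mem_append_left _ (List.getLast_mem (hnef i)))
      have h3c : 3 * t - 2 ≤ X3.card := by
        apply card_le_of_mem_inj _ _ hlastinj
        intro i
        exact last_mem_W2 hef hnef hmidf hchf hN24 i
      exact Or.inl (hasKtt_of_fullyConn hF13 (hd h1 h3 h13) (hkt.trans hX1c) (hkt.trans h3c))
  · rcases not_red_cases h24 hnr24 with hF24 | hN24
    · -- X1, X3 disconnected : every path's first mid vertex is in X2
      have hheadinj : Function.Injective (fun i => (midf i).head (hnef i)) := by
        apply inj_of_disj hdisf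
        intro i
        exact List.mem_cons_of_mem _ (List.mem_append_left _ (List.head_mem (hnef i)))
      have h2c : 3 * t - 2 ≤ X2.card := by
        apply card_le_of_mem_inj _ _ hheadinj
        intro i
        exact head_mem_W1 hsf hnef hmidf hchf hN13 i
      exact Or.inl (hasKtt_of_fullyConn hF24 (hd h2 h4 h24) (hkt.trans h2c) (hkt.trans hX4c))
    · -- all disconnected : we have a configuration
      refine Or.inr ⟨X1, X2, X3, X4, ∅, ∅, 3 * t - 2,
        h1, h2, h3, h4, ⟨h12, h13, h14, h23, h24, h34⟩,
        hr12, hr23, hr34, hN13, hN14, hN24,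
        fullyConn_empty, fullyConn_empty, ?_, ?_, ?_, ?_, ?_, ?_, hpathsN⟩
      · simp
      · simp
      · simp
      · simp only [Finset.card_empty]; omega
      · simp only [Finset.card_empty]; omega
      · simp only [Finset.card_empty]; omega

end ConfDef

section Split
variable {V : Type} [Fintype V] [DecidableEq V] {G : SimpleGraph V}

lemma split_end {fine : Finset (Finset V)} {t : ℕ}
    {W0 W1 W2 W3 A B S1 S2 : Finset V} {k : ℕ}
    (ht : 2 ≤ t)
    (hfA : A ∈ fine) (hfB : B ∈ fine) (hf1 : W1 ∈ fine) (hf2 : W2 ∈ fine) (hf3 : W3 ∈ fine)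
    (hW0 : W0 = A ∪ B)
    (hAne : A.Nonempty) (hBne : B.Nonempty) (hdAB : Disjoint A B)
    (hd01 : Disjoint W0 W1) (hd02 : Disjoint W0 W2) (hd03 : Disjoint W0 W3)
    (hd12 : Disjoint W1 W2) (hd13 : Disjoint W1 W3) (hd23 : Disjoint W2 W3)
    (hr01 : RedEdge G W0 W1) (hr12 : RedEdge G W1 W2) (hr23 : RedEdge G W2 W3)
    (hn02 : NoConn G W0 W2) (hn03 : NoConn G W0 W3) (hn13 : NoConn G W1 W3)
    (hS1 : FullyConn G S1 W1) (hS2 : FullyConn G S2 W2)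
    (hdS12 : Disjoint S1 S2)
    (hdS10 : Disjoint S1 W0) (hdS11 : Disjoint S1 W1) (hdS1W2 : Disjoint S1 W2)
    (hdS13 : Disjoint S1 W3)
    (hdS20 : Disjoint S2 W0) (hdS21 : Disjoint S2 W1) (hdS22 : Disjoint S2 W2)
    (hdS23 : Disjoint S2 W3)
    (hS1c : S1.card < t) (hS2c : S2.card < t)
    (hpot : 3 * t ≤ k + S1.card + S2.card + 2)
    (hpaths : PathsOf G W0 W1 W2 W3 k)
    (hw : ∀ P ∈ fine, redDegree G fine P ≤ 2) :
    HasKtt G t ∨ Conf G t fine := by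
  classical
  obtain ⟨s, e, mid, hs, he, hne', hmid, hch, hdis⟩ := hpaths
  have hkt : t ≤ k := by omega
  have hk0 : 0 < k := by omega
  have hW1c : k ≤ W1.card :=
    card_le_of_mem_inj _ (fun i => head_mem_W1 hs hne' hmid hch hn02 i)
      (inj_of_disj hdis _
        (fun i => List.mem_cons_of_mem _ (List.mem_append_left _ (List.head_mem (hne' i)))))
  have hW2c : k ≤ W2.card :=
    card_le_of_mem_inj _ (fun i => last_mem_W2 he hne' hmid hch hn13 i)
      (inj_of_disj hdis _
        (fun i => List.mem_cons_of_mem _ (List.mem_append_left _ (List.getLast_mem (hne' i)))))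
  have hW3c : k ≤ W3.card := card_le_of_mem_inj e he (inj_of_disj hdis e
    (fun i => List.mem_cons_of_mem _ (List.mem_append_right _ (List.mem_singleton_self _))))
  have hne1' : W1.Nonempty := Finset.card_pos.mp (lt_of_lt_of_le hk0 hW1c)
  have hne2' : W2.Nonempty := Finset.card_pos.mp (lt_of_lt_of_le hk0 hW2c)
  have hne3' : W3.Nonempty := Finset.card_pos.mp (lt_of_lt_of_le hk0 hW3c)
  have hsinj : Function.Injective s := inj_of_disj hdis s (fun i => List.mem_cons_self)
  -- starts lie in A' when the other half is disconnected from W1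
  have startsIn : ∀ (A' B' : Finset V), W0 = A' ∪ B' → NoConn G B' W1 → ∀ i, s i ∈ A' := by
    intro A' B' hW0' hNB' i
    have hsW0 := hs i
    rw [hW0'] at hsW0
    rcases Finset.mem_union.mp hsW0 with h | h
    · exact h
    · exact absurd (adj_head hne' hch i)
        (hNB' _ h _ (head_mem_W1 hs hne' hmid hch hn02 i))
  -- the main construction when A' is red to W1 and B' is not
  have main : ∀ (A' B' : Finset V), A' ∈ fine → B' ∈ fine → W0 = A' ∪ B' →
      A'.Nonempty → B'.Nonempty → Disjoint A' B' →
      RedEdge G A' W1 → ¬ RedEdge G B' W1 → HasKtt G t ∨ Conf G t fine := by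
    intro A' B' hfA' hfB' hW0' hA'ne hB'ne hdA'B' hrA' hnrB'
    have hA'W0 : A' ⊆ W0 := hW0' ▸ Finset.subset_union_left
    have hB'W0 : B' ⊆ W0 := hW0' ▸ Finset.subset_union_right
    have hdA'W1 : Disjoint A' W1 := hd01.symm.mono_right hA'W0 |>.symm
    have hdB'W1 : Disjoint B' W1 := hd01.symm.mono_right hB'W0 |>.symm
    have hdA'W2 : Disjoint A' W2 := hd02.mono_left hA'W0
    have hdA'W3 : Disjoint A' W3 := hd03.mono_left hA'W0
    have hB'1ne : B' ≠ W1 := ne_of_disjoint hdB'W1 hB'ne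
    rcases not_red_cases hB'1ne hnrB' with hFB' | hNB'
    · -- B' is fully connected to W1
      by_cases hBsize : t ≤ B'.card
      · exact Or.inl (hasKtt_of_fullyConn hFB' hdB'W1 hBsize (hkt.trans hW1c))
      · -- drop paths starting in B'
        set I := Finset.univ.filter (fun i => s i ∈ A') with hI
        have hcount : k ≤ I.card + B'.card := by
          have h1 := Finset.card_filter_add_card_filter_not
            (s := (Finset.univ : Finset (Fin k))) (p := fun i => s i ∈ A')
          rw [← hI] at h1
          have h2 : (Finset.univ.filter (fun i => ¬ s i ∈ A')).card ≤ B'.card := by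
            apply Finset.card_le_card_of_injOn s
            · intro i hi
              simp only [Finset.mem_coe, Finset.mem_filter] at hi
              have hsW0 := hs i
              rw [hW0'] at hsW0
              rcases Finset.mem_union.mp hsW0 with h | h
              · exact absurd h hi.2
              · exact h
            · exact fun i _ j _ hij => hsinj hij
          simp only [Finset.card_univ, Fintype.card_fin] at h1
          omega
        have hpaths' : PathsOf G A' W1 W2 W3 I.card :=
          pathsOf_filter hs he hne' hch hdis I
            (fun i hi => (Finset.mem_filter.mp hi).2)
            (fun i _ x hx => hmid i x hx)
        have hS1B' : FullyConn G (S1 ∪ B') W1 := fullyConn_union_left hS1 hFB'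
        have hdS1B'W1 : Disjoint (S1 ∪ B') W1 := Finset.disjoint_union_left.mpr ⟨hdS11, hdB'W1⟩
        by_cases hfire : t ≤ (S1 ∪ B').card
        · exact Or.inl (hasKtt_of_fullyConn hS1B' hdS1B'W1 hfire (hkt.trans hW1c))
        · push_neg at hfire
          have hdS1B' : Disjoint S1 B' := hdS10.mono_right hB'W0
          have hcardU : (S1 ∪ B').card = S1.card + B'.card :=
            Finset.card_union_of_disjoint hdS1B'
          refine Or.inr ⟨A', W1, W2, W3, S1 ∪ B', S2, I.card, hfA', hf1, hf2, hf3,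
            ⟨ne_of_disjoint hdA'W1 hA'ne, ne_of_disjoint hdA'W2 hA'ne,
             ne_of_disjoint hdA'W3 hA'ne, ne_of_disjoint hd12 hne1',
             ne_of_disjoint hd13 hne1', ne_of_disjoint hd23 hne2'⟩,
            hrA', hr12, hr23,
            noConn_mono hn02 hA'W0 subset_rfl, noConn_mono hn03 hA'W0 subset_rfl, hn13,
            hS1B', hS2,
            Finset.disjoint_union_left.mpr ⟨hdS12, (hdS20.mono_right hB'W0).symm⟩,
            ⟨Finset.disjoint_union_left.mpr ⟨hdS10.mono_right hA'W0, hdA'B'.symm⟩,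
             hdS1B'W1,
             Finset.disjoint_union_left.mpr ⟨hdS1W2, hd02.mono_left hB'W0⟩,
             Finset.disjoint_union_left.mpr ⟨hdS13, hd03.mono_left hB'W0⟩⟩,
            ⟨hdS20.mono_right hA'W0, hdS21, hdS22, hdS23⟩,
            hfire, hS2c, by omega, hpaths'⟩
    · -- B' is disconnected from W1 : no path starts in B'
      have hsA' : ∀ i, s i ∈ A' := startsIn A' B' hW0' hNB'
      exact Or.inr ⟨A', W1, W2, W3, S1, S2, k, hfA', hf1, hf2, hf3,
        ⟨ne_of_disjoint hdA'W1 hA'ne, ne_of_disjoint hdA'W2 hA'ne,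
         ne_of_disjoint hdA'W3 hA'ne, ne_of_disjoint hd12 hne1',
         ne_of_disjoint hd13 hne1', ne_of_disjoint hd23 hne2'⟩,
        hrA', hr12, hr23,
        noConn_mono hn02 hA'W0 subset_rfl, noConn_mono hn03 hA'W0 subset_rfl, hn13,
        hS1, hS2, hdS12,
        ⟨hdS10.mono_right hA'W0, hdS11, hdS1W2, hdS13⟩,
        ⟨hdS20.mono_right hA'W0, hdS21, hdS22, hdS23⟩,
        hS1c, hS2c, hpot,
        ⟨s, e, mid, hsA', he, hne', hmid, hch, hdis⟩⟩
  -- case analysis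
  have hAW0 : A ⊆ W0 := hW0 ▸ Finset.subset_union_left
  have hBW0 : B ⊆ W0 := hW0 ▸ Finset.subset_union_right
  have hdAW1 : Disjoint A W1 := hd01.symm.mono_right hAW0 |>.symm
  have hdBW1 : Disjoint B W1 := hd01.symm.mono_right hBW0 |>.symm
  have hA1ne : A ≠ W1 := ne_of_disjoint hdAW1 hAne
  have hB1ne : B ≠ W1 := ne_of_disjoint hdBW1 hBne
  have hABne : A ≠ B := ne_of_disjoint hdAB hAne
  have hsat : ¬ (RedEdge G A W1 ∧ RedEdge G B W1) := by
    rintro ⟨ha, hb⟩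
    exact not_three_red hfA hfB hf2 hABne
      (ne_of_disjoint (hd02.mono_left hAW0) hAne)
      (ne_of_disjoint (hd02.mono_left hBW0) hBne)
      (redEdge_comm ha) (redEdge_comm hb) hr12 (hw W1 hf1)
  by_cases hRA : RedEdge G A W1 <;> by_cases hRB : RedEdge G B W1
  · exact absurd ⟨hRA, hRB⟩ hsat
  · exact main A B hfA hfB hW0 hAne hBne hdAB hRA hRB
  · exact main B A hfB hfA (by rw [hW0, Finset.union_comm]) hBne hAne hdAB.symm hRB hRA
  · rcases not_red_cases hA1ne hRA with hFA | hNA <;>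
      rcases not_red_cases hB1ne hRB with hFB | hNB
    · exact absurd (by rw [hW0]; exact fullyConn_union_left hFA hFB) hr01.2.1
    · by_cases hAsize : t ≤ A.card
      · exact Or.inl (hasKtt_of_fullyConn hFA hdAW1 hAsize (hkt.trans hW1c))
      · exfalso
        have hsA := startsIn A B hW0 hNB
        have : k ≤ A.card := card_le_of_mem_inj s hsA hsinj
        omega
    · by_cases hBsize : t ≤ B.card
      · exact Or.inl (hasKtt_of_fullyConn hFB hdBW1 hBsize (hkt.trans hW1c))
      · exfalso
        have hsB := startsIn B A (by rw [hW0, Finset.union_comm]) hNA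
        have : k ≤ B.card := card_le_of_mem_inj s hsB hsinj
        omega
    · exact absurd (by rw [hW0]; exact noConn_union_left hNA hNB) hr01.2.2

end Split

section SplitMid
variable {V : Type} [Fintype V] [DecidableEq V] {G : SimpleGraph V}

lemma split_mid_red {fine : Finset (Finset V)} {t : ℕ}
    {W0 W1 W2 W3 A B S1 S2 : Finset V} {k : ℕ}
    (ht : 2 ≤ t)
    (hf0 : W0 ∈ fine) (hfA : A ∈ fine) (hfB : B ∈ fine) (hf2 : W2 ∈ fine) (hf3 : W3 ∈ fine)
    (hW1 : W1 = A ∪ B)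
    (hAne : A.Nonempty) (hBne : B.Nonempty) (hdAB : Disjoint A B)
    (hd01 : Disjoint W0 W1) (hd02 : Disjoint W0 W2) (hd03 : Disjoint W0 W3)
    (hd12 : Disjoint W1 W2) (hd13 : Disjoint W1 W3) (hd23 : Disjoint W2 W3)
    (hr01 : RedEdge G W0 W1) (hr12 : RedEdge G W1 W2) (hr23 : RedEdge G W2 W3)
    (hn02 : NoConn G W0 W2) (hn03 : NoConn G W0 W3) (hn13 : NoConn G W1 W3)
    (hS1 : FullyConn G S1 W1) (hS2 : FullyConn G S2 W2)
    (hdS12 : Disjoint S1 S2)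
    (hdS10 : Disjoint S1 W0) (hdS11 : Disjoint S1 W1) (hdS1W2 : Disjoint S1 W2)
    (hdS13 : Disjoint S1 W3)
    (hdS20 : Disjoint S2 W0) (hdS21 : Disjoint S2 W1) (hdS22 : Disjoint S2 W2)
    (hdS23 : Disjoint S2 W3)
    (hS1c : S1.card < t) (hS2c : S2.card < t)
    (hpot : 3 * t ≤ k + S1.card + S2.card + 2)
    (hpaths : PathsOf G W0 W1 W2 W3 k)
    (hw : ∀ P ∈ fine, redDegree G fine P ≤ 2)
    (hRA2 : RedEdge G A W2) (hnrB2 : ¬ RedEdge G B W2) :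
    HasKtt G t ∨ Conf G t fine := by
  classical
  obtain ⟨s, e, mid, hs, he, hne', hmid, hch, hdis⟩ := hpaths
  have hkt : t ≤ k := by omega
  have hk0 : 0 < k := by omega
  have hW0c : k ≤ W0.card := card_le_of_mem_inj s hs
    (inj_of_disj hdis s (fun i => List.mem_cons_self))
  have hW2c : k ≤ W2.card :=
    card_le_of_mem_inj _ (fun i => last_mem_W2 he hne' hmid hch hn13 i)
      (inj_of_disj hdis _
        (fun i => List.mem_cons_of_mem _ (List.mem_append_left _ (List.getLast_mem (hne' i)))))
  have hW3c : k ≤ W3.card := card_le_of_mem_inj e he (inj_of_disj hdis e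
    (fun i => List.mem_cons_of_mem _ (List.mem_append_right _ (List.mem_singleton_self _))))
  have hne0' : W0.Nonempty := Finset.card_pos.mp (lt_of_lt_of_le hk0 hW0c)
  have hne2' : W2.Nonempty := Finset.card_pos.mp (lt_of_lt_of_le hk0 hW2c)
  have hne3' : W3.Nonempty := Finset.card_pos.mp (lt_of_lt_of_le hk0 hW3c)
  have hAW1 : A ⊆ W1 := hW1 ▸ Finset.subset_union_left
  have hBW1 : B ⊆ W1 := hW1 ▸ Finset.subset_union_right
  have hdA0 : Disjoint A W0 := (hd01.mono_right hAW1).symm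
  have hdB0 : Disjoint B W0 := (hd01.mono_right hBW1).symm
  have hdAW2 : Disjoint A W2 := hd12.mono_left hAW1
  have hdBW2 : Disjoint B W2 := hd12.mono_left hBW1
  have hdAW3 : Disjoint A W3 := hd13.mono_left hAW1
  have hdBW3 : Disjoint B W3 := hd13.mono_left hBW1
  have hABne' : A ≠ B := ne_of_disjoint hdAB hAne
  have hA0ne : A ≠ W0 := ne_of_disjoint hdA0 hAne
  have hB0ne : B ≠ W0 := ne_of_disjoint hdB0 hBne
  have hB2ne : B ≠ W2 := ne_of_disjoint hdBW2 hBne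
  have hdropLast : ∀ i, (s i :: (mid i ++ [e i])).dropLast = s i :: mid i := by
    intro i
    rw [show s i :: (mid i ++ [e i]) = (s i :: mid i) ++ [e i] by simp, List.dropLast_concat]
  have hgetLast : ∀ i (h : (s i :: (mid i ++ [e i])) ≠ []),
      (s i :: (mid i ++ [e i])).getLast h = e i := by
    intro i h
    have h1 : (s i :: (mid i ++ [e i])).getLast? = some (e i) := by
      rw [show s i :: (mid i ++ [e i]) = (s i :: mid i) ++ [e i] by simp, List.getLast?_concat]
    have h2 := List.getLast?_eq_getLast h
    rw [h1] at h2
    exact (Option.some.inj h2).symm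
  -- common helper : the head of each mid lies in W1
  have hheadW1 : ∀ i, (mid i).head (hne' i) ∈ W1 := fun i =>
    head_mem_W1 hs hne' hmid hch hn02 i
  have hheadsupp : ∀ i,
      (mid i).head (hne' i) ∈ s i :: (mid i ++ [e i]) :=
    fun i => List.mem_cons_of_mem _ (List.mem_append_left _ (List.head_mem (hne' i)))
  rcases not_red_cases hB2ne hnrB2 with hFB2 | hNB2
  · -- case (R, F) : B is fully connected to W2
    by_cases hBsize : t ≤ B.card
    · exact Or.inl (hasKtt_of_fullyConn hFB2 hdBW2 hBsize (hkt.trans hW2c))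
    push_neg at hBsize
    have hS2B : FullyConn G (S2 ∪ B) W2 := fullyConn_union_left hS2 hFB2
    have hdS2BW2 : Disjoint (S2 ∪ B) W2 := Finset.disjoint_union_left.mpr ⟨hdS22, hdBW2⟩
    have hdS2B : Disjoint S2 B := hdS21.mono_right hBW1
    have hcardU : (S2 ∪ B).card = S2.card + B.card := Finset.card_union_of_disjoint hdS2B
    set I := Finset.univ.filter
      (fun i => ∀ x ∈ s i :: (mid i ++ [e i]), x ∉ B) with hI
    have hcount : k ≤ I.card + B.card := by
      have h1 := untouched_count (s := s) (e := e) (mid := mid) hdis B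
      rwa [← hI] at h1
    have hImid : ∀ i ∈ I, ∀ x ∈ mid i, x ∈ A ∨ x ∈ W2 := by
      intro i hi x hx
      rcases hmid i x hx with h | h
      · rw [hW1] at h
        rcases Finset.mem_union.mp h with h' | h'
        · exact Or.inl h'
        · exact absurd h' ((Finset.mem_filter.mp hi).2 x
            (List.mem_cons_of_mem _ (List.mem_append_left _ hx)))
      · exact Or.inr h
    rcases rel_cases (G := G) hA0ne with hRA0 | hFA0 | hNA0
    · -- A red to W0 : new configuration W0 A W2 W3 with reservoir S2 ∪ B
      by_cases hfire : t ≤ (S2 ∪ B).card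
      · exact Or.inl (hasKtt_of_fullyConn hS2B hdS2BW2 hfire (hkt.trans hW2c))
      push_neg at hfire
      have hpathsI : PathsOf G W0 A W2 W3 I.card :=
        pathsOf_filter hs he hne' hch hdis I (fun i _ => hs i) hImid
      exact Or.inr ⟨W0, A, W2, W3, S1, S2 ∪ B, I.card, hf0, hfA, hf2, hf3,
        ⟨(ne_of_disjoint hdA0 hAne).symm, ne_of_disjoint hd02 hne0',
         ne_of_disjoint hd03 hne0', ne_of_disjoint hdAW2 hAne,
         ne_of_disjoint hdAW3 hAne, ne_of_disjoint hd23 hne2'⟩,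
        redEdge_comm hRA0, hRA2, hr23,
        hn02, hn03, noConn_mono hn13 hAW1 subset_rfl,
        fullyConn_mono hS1 subset_rfl hAW1, hS2B,
        Finset.disjoint_union_right.mpr ⟨hdS12, hdS11.mono_right hBW1⟩,
        ⟨hdS10, hdS11.mono_right hAW1, hdS1W2, hdS13⟩,
        ⟨Finset.disjoint_union_left.mpr ⟨hdS20, hdB0⟩,
         Finset.disjoint_union_left.mpr ⟨hdS21.mono_right hAW1, hdAB.symm⟩,
         hdS2BW2,
         Finset.disjoint_union_left.mpr ⟨hdS23, hdBW3⟩⟩,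
        hS1c, hfire, by omega, hpathsI⟩
    · -- A fully connected to W0
      by_cases hAsize : t ≤ A.card
      · exact Or.inl (hasKtt_of_fullyConn hFA0 hdA0 hAsize (hkt.trans hW0c))
      push_neg at hAsize
      by_cases hfire : t ≤ (S2 ∪ B).card
      · exact Or.inl (hasKtt_of_fullyConn hS2B hdS2BW2 hfire (hkt.trans hW2c))
      push_neg at hfire
      exfalso
      have hIA : I.card ≤ A.card := by
        apply Finset.card_le_card_of_injOn (fun i => (mid i).head (hne' i))
        · intro i hi
          have hh := hheadW1 i
          rw [hW1] at hh
          rcases Finset.mem_union.mp hh with h' | h'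
          · exact h'
          · exact absurd h' ((Finset.mem_filter.mp hi).2 _ (hheadsupp i))
        · exact fun i _ j _ hij => (inj_of_disj hdis _ hheadsupp) hij
      omega
    · -- A disconnected from W0 : every path's first mid vertex lies in B, too few
      exfalso
      have hheadB : ∀ i, (mid i).head (hne' i) ∈ B := by
        intro i
        have hh := hheadW1 i
        rw [hW1] at hh
        rcases Finset.mem_union.mp hh with h' | h'
        · exact absurd (adj_head hne' hch i).symm (hNA0 _ h' (s i) (hs i))
        · exact h'
      have : k ≤ B.card := card_le_of_mem_inj _ hheadB (inj_of_disj hdis _ hheadsupp)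
      omega
  · -- case (R, N) : B is disconnected from W2
    -- every path visits A (predecessor of its first W2 vertex)
    have htouchA : ∀ i, ∃ y ∈ s i :: (mid i ++ [e i]), y ∈ A := by
      intro i
      obtain ⟨y, z, hyn, hz, hadj, hymem, hzmem⟩ :=
        chain_first_pred (R := G.Adj) (fun x => x ∈ W2) _ (hch i)
          ⟨(mid i).getLast (hne' i),
            List.mem_cons_of_mem _ (List.mem_append_left _ (List.getLast_mem (hne' i))),
            last_mem_W2 he hne' hmid hch hn13 i⟩
          (fun h => by
            simp only [List.head_cons]
            exact fun hc => Finset.disjoint_left.mp hd02 (hs i) hc)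
      rw [hdropLast i] at hymem
      rcases List.mem_cons.mp hymem with rfl | hymid
      · exact absurd hadj (hn02 _ (hs i) _ hz)
      · rcases hmid i y hymid with h | h
        · rw [hW1] at h
          rcases Finset.mem_union.mp h with h' | h'
          · exact ⟨y, List.mem_cons_of_mem _ (List.mem_append_left _ hymid), h'⟩
          · exact absurd hadj (hNB2 _ h' _ hz)
        · exact absurd h hyn
    have hAk : k ≤ A.card := by
      choose f hfmem hfA' using htouchA
      exact card_le_of_mem_inj f hfA' (inj_of_disj hdis f hfmem)
    rcases rel_cases (G := G) hA0ne with hRA0 | hFA0 | hNA0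
    · -- A red to W0
      rcases rel_cases (G := G) hABne' with hRAB | hFAB | hNAB
      · -- A red to B as well : red degree of A would be 3
        exact absurd (hw A hfA) (fun hdeg => not_three_red hf0 hf2 hfB
          (ne_of_disjoint hd02 hne0') (ne_of_disjoint hdB0.symm hne0')
          (ne_of_disjoint hdBW2.symm hne2') hRA0 hRA2 hRAB hdeg)
      · -- A fully connected to B
        by_cases hBsize : t ≤ B.card
        · exact Or.inl (hasKtt_of_fullyConn hFAB hdAB (hkt.trans hAk) hBsize)
        push_neg at hBsize
        have hS1B : FullyConn G (S1 ∪ B) A :=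
          fullyConn_union_left (fullyConn_mono hS1 subset_rfl hAW1) (fullyConn_comm hFAB)
        have hdS1BA : Disjoint (S1 ∪ B) A :=
          Finset.disjoint_union_left.mpr ⟨hdS11.mono_right hAW1, hdAB.symm⟩
        by_cases hfire : t ≤ (S1 ∪ B).card
        · exact Or.inl (hasKtt_of_fullyConn hS1B hdS1BA hfire (hkt.trans hAk))
        push_neg at hfire
        have hdS1B : Disjoint S1 B := hdS11.mono_right hBW1
        have hcardU : (S1 ∪ B).card = S1.card + B.card := Finset.card_union_of_disjoint hdS1B
        set I := Finset.univ.filter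
          (fun i => ∀ x ∈ s i :: (mid i ++ [e i]), x ∉ B) with hI
        have hcount : k ≤ I.card + B.card := by
          have h1 := untouched_count (s := s) (e := e) (mid := mid) hdis B
          rwa [← hI] at h1
        have hImid : ∀ i ∈ I, ∀ x ∈ mid i, x ∈ A ∨ x ∈ W2 := by
          intro i hi x hx
          rcases hmid i x hx with h | h
          · rw [hW1] at h
            rcases Finset.mem_union.mp h with h' | h'
            · exact Or.inl h'
            · exact absurd h' ((Finset.mem_filter.mp hi).2 x
                (List.mem_cons_of_mem _ (List.mem_append_left _ hx)))
          · exact Or.inr h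
        have hpathsI : PathsOf G W0 A W2 W3 I.card :=
          pathsOf_filter hs he hne' hch hdis I (fun i _ => hs i) hImid
        exact Or.inr ⟨W0, A, W2, W3, S1 ∪ B, S2, I.card, hf0, hfA, hf2, hf3,
          ⟨(ne_of_disjoint hdA0 hAne).symm, ne_of_disjoint hd02 hne0',
           ne_of_disjoint hd03 hne0', ne_of_disjoint hdAW2 hAne,
           ne_of_disjoint hdAW3 hAne, ne_of_disjoint hd23 hne2'⟩,
          redEdge_comm hRA0, hRA2, hr23,
          hn02, hn03, noConn_mono hn13 hAW1 subset_rfl,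
          hS1B, hS2,
          Finset.disjoint_union_left.mpr ⟨hdS12, (hdS21.mono_right hBW1).symm⟩,
          ⟨Finset.disjoint_union_left.mpr ⟨hdS10, hdB0⟩, hdS1BA,
           Finset.disjoint_union_left.mpr ⟨hdS1W2, hdBW2⟩,
           Finset.disjoint_union_left.mpr ⟨hdS13, hdBW3⟩⟩,
          ⟨hdS20, hdS21.mono_right hAW1, hdS22, hdS23⟩,
          hfire, hS2c, by omega, hpathsI⟩
      · -- A disconnected from B : no path meets B at all
        have havoid : ∀ i, ∀ x ∈ s i :: (mid i ++ [e i]), x ∉ B := by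
          intro i x hx hxB
          obtain ⟨y, z, hyB, hzn, hadj, hymem, hzmem⟩ :=
            chain_last_succ (R := G.Adj) (fun x => x ∈ B) _ (hch i) ⟨x, hx, hxB⟩
              (fun h => by
                rw [hgetLast i h]
                exact fun hc => Finset.disjoint_left.mp hdBW3 hc (he i))
          simp only [List.tail_cons] at hzmem
          rcases List.mem_append.mp hzmem with hzmid | hze
          · rcases hmid i z hzmid with h | h
            · rw [hW1] at h
              rcases Finset.mem_union.mp h with h' | h'
              · exact hNAB _ h' _ hyB hadj.symm
              · exact hzn h'
            · exact hNB2 _ hyB _ h hadj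
          · simp only [List.mem_singleton] at hze
            subst hze
            exact hn13 _ (hBW1 hyB) _ (he i) hadj
        refine Or.inr ⟨W0, A, W2, W3, S1, S2, k, hf0, hfA, hf2, hf3,
          ⟨(ne_of_disjoint hdA0 hAne).symm, ne_of_disjoint hd02 hne0',
           ne_of_disjoint hd03 hne0', ne_of_disjoint hdAW2 hAne,
           ne_of_disjoint hdAW3 hAne, ne_of_disjoint hd23 hne2'⟩,
          redEdge_comm hRA0, hRA2, hr23,
          hn02, hn03, noConn_mono hn13 hAW1 subset_rfl,
          fullyConn_mono hS1 subset_rfl hAW1, hS2,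
          hdS12,
          ⟨hdS10, hdS11.mono_right hAW1, hdS1W2, hdS13⟩,
          ⟨hdS20, hdS21.mono_right hAW1, hdS22, hdS23⟩,
          hS1c, hS2c, hpot,
          ⟨s, e, mid, hs, he, hne', ?_, hch, hdis⟩⟩
        intro i x hx
        rcases hmid i x hx with h | h
        · rw [hW1] at h
          rcases Finset.mem_union.mp h with h' | h'
          · exact Or.inl h'
          · exact absurd h' (havoid i x (List.mem_cons_of_mem _ (List.mem_append_left _ hx)))
        · exact Or.inr h
    · -- A fully connected to W0 : fire
      exact Or.inl (hasKtt_of_fullyConn hFA0 hdA0 (hkt.trans hAk) (hkt.trans hW0c))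
    · -- A disconnected from W0 : heads lie in B
      have hheadB : ∀ i, (mid i).head (hne' i) ∈ B := by
        intro i
        have hh := hheadW1 i
        rw [hW1] at hh
        rcases Finset.mem_union.mp hh with h' | h'
        · exact absurd (adj_head hne' hch i).symm (hNA0 _ h' (s i) (hs i))
        · exact h'
      have hBk : k ≤ B.card := card_le_of_mem_inj _ hheadB (inj_of_disj hdis _ hheadsupp)
      rcases rel_cases (G := G) hB0ne with hRB0 | hFB0 | hNB0
      · -- B red to W0
        rcases rel_cases (G := G) hABne' with hRAB | hFAB | hNAB
        · -- A red to B : truncate the paths, configuration B A W2 W3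
          have htouchB : ∀ i, ∃ x ∈ s i :: (mid i ++ [e i]), x ∈ B :=
            fun i => ⟨(mid i).head (hne' i), hheadsupp i, hheadB i⟩
          have hpathsT : PathsOf G B A W2 W3 k :=
            pathsOf_truncate hs he hne' hmid hch hdis hW1 htouchB
              (noConn_mono hn13 hBW1 subset_rfl) (hd01.mono_right hBW1) hdBW3.symm
          exact Or.inr ⟨B, A, W2, W3, S1, S2, k, hfB, hfA, hf2, hf3,
            ⟨hABne'.symm, ne_of_disjoint hdBW2 hBne, ne_of_disjoint hdBW3 hBne,
             ne_of_disjoint hdAW2 hAne, ne_of_disjoint hdAW3 hAne,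
             ne_of_disjoint hd23 hne2'⟩,
            redEdge_comm hRAB, hRA2, hr23,
            hNB2, noConn_mono hn13 hBW1 subset_rfl, noConn_mono hn13 hAW1 subset_rfl,
            fullyConn_mono hS1 subset_rfl hAW1, hS2,
            hdS12,
            ⟨hdS11.mono_right hBW1, hdS11.mono_right hAW1, hdS1W2, hdS13⟩,
            ⟨hdS21.mono_right hBW1, hdS21.mono_right hAW1, hdS22, hdS23⟩,
            hS1c, hS2c, hpot, hpathsT⟩
        · -- A fully connected to B : fire
          exact Or.inl (hasKtt_of_fullyConn hFAB hdAB (hkt.trans hAk) (hkt.trans hBk))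
        · -- A disconnected from B : no path can ever reach A ∪ W2
          exfalso
          set i0 : Fin k := ⟨0, hk0⟩
          obtain ⟨y, z, hyn, hz, hadj, hymem, hzmem⟩ :=
            chain_first_pred (R := G.Adj) (fun x => x ∈ A ∪ W2) _ (hch i0)
              ⟨(mid i0).getLast (hne' i0),
                List.mem_cons_of_mem _ (List.mem_append_left _ (List.getLast_mem (hne' i0))),
                Finset.mem_union_right _ (last_mem_W2 he hne' hmid hch hn13 i0)⟩
              (fun h => by
                simp only [List.head_cons]
                intro hc
                rcases Finset.mem_union.mp hc with h' | h'
                · exact Finset.disjoint_left.mp hdA0 h' (hs i0)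
                · exact Finset.disjoint_left.mp hd02 (hs i0) h')
          rw [hdropLast i0] at hymem
          rcases List.mem_cons.mp hymem with rfl | hymid
          · rcases Finset.mem_union.mp hz with h' | h'
            · exact hNA0 _ h' _ (hs i0) hadj.symm
            · exact hn02 _ (hs i0) _ h' hadj
          · rcases hmid i0 y hymid with h | h
            · rw [hW1] at h
              rcases Finset.mem_union.mp h with h' | h'
              · exact hyn (Finset.mem_union_left _ h')
              · rcases Finset.mem_union.mp hz with h'' | h''
                · exact hNAB _ h'' _ h' hadj.symm
                · exact hNB2 _ h' _ h'' hadj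
            · exact hyn (Finset.mem_union_right _ h)
      · -- B fully connected to W0 : fire
        exact Or.inl (hasKtt_of_fullyConn hFB0 hdB0 (hkt.trans hBk) (hkt.trans hW0c))
      · -- both halves disconnected from W0 : contradicts the red edge W0 W1
        exfalso
        apply hr01.2.2
        apply noConn_comm
        rw [hW1]
        exact noConn_union_left hNA0 hNB0

end SplitMid

section SplitMid2
variable {V : Type} [Fintype V] [DecidableEq V] {G : SimpleGraph V}

lemma split_mid_fn {t : ℕ} {W0 W1 W2 W3 A B : Finset V} {k : ℕ}
    (hkt : t ≤ k) (hk0 : 0 < k)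
    (hW1 : W1 = A ∪ B)
    (hd02 : Disjoint W0 W2) (hd12 : Disjoint W1 W2)
    (hn02 : NoConn G W0 W2) (hn13 : NoConn G W1 W3)
    (hFA2 : FullyConn G A W2) (hNB2 : NoConn G B W2)
    (hpaths : PathsOf G W0 W1 W2 W3 k) : HasKtt G t := by
  classical
  obtain ⟨s, e, mid, hs, he, hne', hmid, hch, hdis⟩ := hpaths
  have hAW1 : A ⊆ W1 := hW1 ▸ Finset.subset_union_left
  have hW2c : k ≤ W2.card :=
    card_le_of_mem_inj _ (fun i => last_mem_W2 he hne' hmid hch hn13 i)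
      (inj_of_disj hdis _
        (fun i => List.mem_cons_of_mem _ (List.mem_append_left _ (List.getLast_mem (hne' i)))))
  have hdropLast : ∀ i, (s i :: (mid i ++ [e i])).dropLast = s i :: mid i := by
    intro i
    rw [show s i :: (mid i ++ [e i]) = (s i :: mid i) ++ [e i] by simp, List.dropLast_concat]
  have htouchA : ∀ i, ∃ y ∈ s i :: (mid i ++ [e i]), y ∈ A := by
    intro i
    obtain ⟨y, z, hyn, hz, hadj, hymem, hzmem⟩ :=
      chain_first_pred (R := G.Adj) (fun x => x ∈ W2) _ (hch i)
        ⟨(mid i).getLast (hne' i),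
          List.mem_cons_of_mem _ (List.mem_append_left _ (List.getLast_mem (hne' i))),
          last_mem_W2 he hne' hmid hch hn13 i⟩
        (fun h => by
          simp only [List.head_cons]
          exact fun hc => Finset.disjoint_left.mp hd02 (hs i) hc)
    rw [hdropLast i] at hymem
    rcases List.mem_cons.mp hymem with rfl | hymid
    · exact absurd hadj (hn02 _ (hs i) _ hz)
    · rcases hmid i y hymid with h | h
      · rw [hW1] at h
        rcases Finset.mem_union.mp h with h' | h'
        · exact ⟨y, List.mem_cons_of_mem _ (List.mem_append_left _ hymid), h'⟩
        · exact absurd hadj (hNB2 _ h' _ hz)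
      · exact absurd h hyn
  have hAk : k ≤ A.card := by
    choose f hfmem hfA' using htouchA
    exact card_le_of_mem_inj f hfA' (inj_of_disj hdis f hfmem)
  exact hasKtt_of_fullyConn hFA2 (hd12.mono_left hAW1) (hkt.trans hAk) (hkt.trans hW2c)

lemma split_mid {fine : Finset (Finset V)} {t : ℕ}
    {W0 W1 W2 W3 A B S1 S2 : Finset V} {k : ℕ}
    (ht : 2 ≤ t)
    (hf0 : W0 ∈ fine) (hfA : A ∈ fine) (hfB : B ∈ fine) (hf2 : W2 ∈ fine) (hf3 : W3 ∈ fine)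
    (hW1 : W1 = A ∪ B)
    (hAne : A.Nonempty) (hBne : B.Nonempty) (hdAB : Disjoint A B)
    (hd01 : Disjoint W0 W1) (hd02 : Disjoint W0 W2) (hd03 : Disjoint W0 W3)
    (hd12 : Disjoint W1 W2) (hd13 : Disjoint W1 W3) (hd23 : Disjoint W2 W3)
    (hr01 : RedEdge G W0 W1) (hr12 : RedEdge G W1 W2) (hr23 : RedEdge G W2 W3)
    (hn02 : NoConn G W0 W2) (hn03 : NoConn G W0 W3) (hn13 : NoConn G W1 W3)
    (hS1 : FullyConn G S1 W1) (hS2 : FullyConn G S2 W2)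
    (hdS12 : Disjoint S1 S2)
    (hdS10 : Disjoint S1 W0) (hdS11 : Disjoint S1 W1) (hdS1W2 : Disjoint S1 W2)
    (hdS13 : Disjoint S1 W3)
    (hdS20 : Disjoint S2 W0) (hdS21 : Disjoint S2 W1) (hdS22 : Disjoint S2 W2)
    (hdS23 : Disjoint S2 W3)
    (hS1c : S1.card < t) (hS2c : S2.card < t)
    (hpot : 3 * t ≤ k + S1.card + S2.card + 2)
    (hpaths : PathsOf G W0 W1 W2 W3 k)
    (hw : ∀ P ∈ fine, redDegree G fine P ≤ 2) :
    HasKtt G t ∨ Conf G t fine := by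
  classical
  have hkt : t ≤ k := by omega
  have hk0 : 0 < k := by omega
  have hAW1 : A ⊆ W1 := hW1 ▸ Finset.subset_union_left
  have hBW1 : B ⊆ W1 := hW1 ▸ Finset.subset_union_right
  have hdAW2 : Disjoint A W2 := hd12.mono_left hAW1
  have hdBW2 : Disjoint B W2 := hd12.mono_left hBW1
  have hdAW3 : Disjoint A W3 := hd13.mono_left hAW1
  have hdBW3 : Disjoint B W3 := hd13.mono_left hBW1
  have hA2ne : A ≠ W2 := ne_of_disjoint hdAW2 hAne
  have hB2ne : B ≠ W2 := ne_of_disjoint hdBW2 hBne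
  have hABne' : A ≠ B := ne_of_disjoint hdAB hAne
  have hsat2 : ¬ (RedEdge G A W2 ∧ RedEdge G B W2) := by
    rintro ⟨ha, hb⟩
    exact not_three_red hf3 hfA hfB
      (ne_of_disjoint hdAW3 hAne).symm (ne_of_disjoint hdBW3 hBne).symm hABne'
      hr23 (redEdge_comm ha) (redEdge_comm hb) (hw W2 hf2)
  by_cases hRA2 : RedEdge G A W2 <;> by_cases hRB2 : RedEdge G B W2
  · exact absurd ⟨hRA2, hRB2⟩ hsat2
  · exact split_mid_red ht hf0 hfA hfB hf2 hf3 hW1 hAne hBne hdAB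
      hd01 hd02 hd03 hd12 hd13 hd23 hr01 hr12 hr23 hn02 hn03 hn13
      hS1 hS2 hdS12 hdS10 hdS11 hdS1W2 hdS13 hdS20 hdS21 hdS22 hdS23
      hS1c hS2c hpot hpaths hw hRA2 hRB2
  · exact split_mid_red ht hf0 hfB hfA hf2 hf3 (by rw [hW1, Finset.union_comm])
      hBne hAne hdAB.symm
      hd01 hd02 hd03 hd12 hd13 hd23 hr01 hr12 hr23 hn02 hn03 hn13
      hS1 hS2 hdS12 hdS10 hdS11 hdS1W2 hdS13 hdS20 hdS21 hdS22 hdS23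
      hS1c hS2c hpot hpaths hw hRB2 hRA2
  · rcases not_red_cases hA2ne hRA2 with hFA2 | hNA2 <;>
      rcases not_red_cases hB2ne hRB2 with hFB2 | hNB2
    · exact absurd (by rw [hW1]; exact fullyConn_union_left hFA2 hFB2) hr12.2.1
    · exact Or.inl (split_mid_fn hkt hk0 hW1 hd02 hd12 hn02 hn13 hFA2 hNB2 hpaths)
    · exact Or.inl (split_mid_fn hkt hk0 (by rw [hW1, Finset.union_comm])
        hd02 hd12 hn02 hn13 hFB2 hNA2 hpaths)
    · exact absurd (by rw [hW1]; exact noConn_union_left hNA2 hNB2) hr12.2.2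

end SplitMid2

section StepFinal
variable {V : Type} [Fintype V] [DecidableEq V] {G : SimpleGraph V}

lemma conf_step {t : ℕ} (ht : 2 ≤ t)
    (fineP coarseP : Finpartition (Finset.univ : Finset V))
    (hmerge : IsMergeOf fineP.parts coarseP.parts)
    (hw : ∀ P ∈ fineP.parts, redDegree G fineP.parts P ≤ 2)
    (hc : Conf G t coarseP.parts) : HasKtt G t ∨ Conf G t fineP.parts := by
  classical
  obtain ⟨A, hA, B, hB, hAB, hPcoarse⟩ := hmerge
  obtain ⟨W0, W1, W2, W3, S1, S2, k, hm0, hm1, hm2, hm3,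
    ⟨hne01, hne02, hne03, hne12, hne13, hne23⟩,
    hr01, hr12, hr23, hn02, hn03, hn13, hS1, hS2, hdS12,
    ⟨hdS10, hdS11, hdS1W2, hdS13⟩, ⟨hdS20, hdS21, hdS22, hdS23⟩,
    hS1c, hS2c, hpot, hpaths⟩ := hc
  have hfd : ∀ {P Q : Finset V}, P ∈ fineP.parts → Q ∈ fineP.parts → P ≠ Q → Disjoint P Q :=
    fun hP hQ h => fineP.disjoint hP hQ h
  have hcd : ∀ {P Q : Finset V}, P ∈ coarseP.parts → Q ∈ coarseP.parts → P ≠ Q → Disjoint P Q :=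
    fun hP hQ h => coarseP.disjoint hP hQ h
  have hAne : A.Nonempty := fineP.nonempty_of_mem_parts hA
  have hBne : B.Nonempty := fineP.nonempty_of_mem_parts hB
  have hdAB : Disjoint A B := hfd hA hB hAB
  have hmemfine : ∀ {W : Finset V}, W ∈ coarseP.parts → W = A ∪ B ∨ W ∈ fineP.parts := by
    intro W hW
    rw [hPcoarse] at hW
    rcases Finset.mem_union.mp hW with h | h
    · exact Or.inr (Finset.mem_sdiff.mp h).1
    · simp only [Finset.mem_singleton] at h
      exact Or.inl h
  have hd01 := hcd hm0 hm1 hne01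
  have hd02 := hcd hm0 hm2 hne02
  have hd03 := hcd hm0 hm3 hne03
  have hd12 := hcd hm1 hm2 hne12
  have hd13 := hcd hm1 hm3 hne13
  have hd23 := hcd hm2 hm3 hne23
  by_cases h0 : W0 = A ∪ B
  · have hf1 : W1 ∈ fineP.parts :=
      (hmemfine hm1).resolve_left (fun hc' => hne01 (h0.trans hc'.symm))
    have hf2 : W2 ∈ fineP.parts :=
      (hmemfine hm2).resolve_left (fun hc' => hne02 (h0.trans hc'.symm))
    have hf3 : W3 ∈ fineP.parts :=
      (hmemfine hm3).resolve_left (fun hc' => hne03 (h0.trans hc'.symm))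
    exact split_end ht hA hB hf1 hf2 hf3 h0 hAne hBne hdAB
      hd01 hd02 hd03 hd12 hd13 hd23 hr01 hr12 hr23 hn02 hn03 hn13
      hS1 hS2 hdS12 hdS10 hdS11 hdS1W2 hdS13 hdS20 hdS21 hdS22 hdS23
      hS1c hS2c hpot hpaths hw
  have hf0 : W0 ∈ fineP.parts := (hmemfine hm0).resolve_left h0
  by_cases h1 : W1 = A ∪ B
  · have hf2 : W2 ∈ fineP.parts :=
      (hmemfine hm2).resolve_left (fun hc' => hne12 (h1.trans hc'.symm))
    have hf3 : W3 ∈ fineP.parts :=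
      (hmemfine hm3).resolve_left (fun hc' => hne13 (h1.trans hc'.symm))
    exact split_mid ht hf0 hA hB hf2 hf3 h1 hAne hBne hdAB
      hd01 hd02 hd03 hd12 hd13 hd23 hr01 hr12 hr23 hn02 hn03 hn13
      hS1 hS2 hdS12 hdS10 hdS11 hdS1W2 hdS13 hdS20 hdS21 hdS22 hdS23
      hS1c hS2c hpot hpaths hw
  have hf1 : W1 ∈ fineP.parts := (hmemfine hm1).resolve_left h1
  by_cases h2 : W2 = A ∪ B
  · have hf3 : W3 ∈ fineP.parts :=
      (hmemfine hm3).resolve_left (fun hc' => hne23 (h2.trans hc'.symm))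
    -- reverse the configuration and split its second part
    exact split_mid ht hf3 hA hB hf1 hf0 h2 hAne hBne hdAB
      hd23.symm hd13.symm hd03.symm hd12.symm hd02.symm hd01.symm
      (redEdge_comm hr23) (redEdge_comm hr12) (redEdge_comm hr01)
      (noConn_comm hn13) (noConn_comm hn03) (noConn_comm hn02)
      hS2 hS1 hdS12.symm
      hdS23 hdS22 hdS21 hdS20 hdS13 hdS1W2 hdS11 hdS10
      hS2c hS1c (by omega) (pathsOf_reverse hpaths) hw
  have hf2 : W2 ∈ fineP.parts := (hmemfine hm2).resolve_left h2
  by_cases h3 : W3 = A ∪ B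
  · -- reverse the configuration and split its end part
    exact split_end ht hA hB hf2 hf1 hf0 h3 hAne hBne hdAB
      hd23.symm hd13.symm hd03.symm hd12.symm hd02.symm hd01.symm
      (redEdge_comm hr23) (redEdge_comm hr12) (redEdge_comm hr01)
      (noConn_comm hn13) (noConn_comm hn03) (noConn_comm hn02)
      hS2 hS1 hdS12.symm
      hdS23 hdS22 hdS21 hdS20 hdS13 hdS1W2 hdS11 hdS10
      hS2c hS1c (by omega) (pathsOf_reverse hpaths) hw
  have hf3 : W3 ∈ fineP.parts := (hmemfine hm3).resolve_left h3
  exact Or.inr ⟨W0, W1, W2, W3, S1, S2, k, hf0, hf1, hf2, hf3,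
    ⟨hne01, hne02, hne03, hne12, hne13, hne23⟩,
    hr01, hr12, hr23, hn02, hn03, hn13, hS1, hS2, hdS12,
    ⟨hdS10, hdS11, hdS1W2, hdS13⟩, ⟨hdS20, hdS21, hdS22, hdS23⟩,
    hS1c, hS2c, hpot, hpaths⟩

end StepFinal

/-- If in some quotient trigraph of a `2`-partition sequence of `G` there is a red path
`X₁ X₂ X₃ X₄` with no red edge `X₁ X₄` such that `G[X₁∪X₂∪X₃∪X₄]` contains `3t - 2`
pairwise vertex-disjoint `X₁`–`X₄` paths, then `G` contains a semi-induced biclique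
`K_{t,t}`. -/
theorem highly_connected_red_path_implies_biclique {V : Type} [Fintype V] [DecidableEq V]
    (G : SimpleGraph V) (t : ℕ)
    (Pseq : ℕ → Finpartition (Finset.univ : Finset V))
    (hseq : IsPartitionSeq Pseq) (hwidth : SeqWidthLE G Pseq 2)
    (m : ℕ) (hm1 : 1 ≤ m) (hmn : m ≤ Fintype.card V)
    (X₁ X₂ X₃ X₄ : Finset V)
    (h1 : X₁ ∈ (Pseq m).parts) (h2 : X₂ ∈ (Pseq m).parts)
    (h3 : X₃ ∈ (Pseq m).parts) (h4 : X₄ ∈ (Pseq m).parts)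
    (h12 : X₁ ≠ X₂) (h13 : X₁ ≠ X₃) (h14 : X₁ ≠ X₄)
    (h23 : X₂ ≠ X₃) (h24 : X₂ ≠ X₄) (h34 : X₃ ≠ X₄)
    (hr12 : RedEdge G X₁ X₂) (hr23 : RedEdge G X₂ X₃) (hr34 : RedEdge G X₃ X₄)
    (hr14 : ¬ RedEdge G X₁ X₄)
    (hpaths : HasDisjointPaths G (X₁ ∪ X₂ ∪ X₃ ∪ X₄) X₁ X₄ (3 * t - 2)) :
    HasKtt G t := by
  classical
  rcases Nat.lt_or_ge t 1 with ht0 | ht1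
  · -- t = 0
    have : t = 0 := by omega
    subst this
    exact ⟨Fin.elim0, Fin.elim0, fun x => x.elim0, fun x => x.elim0,
      fun i => i.elim0, fun i => i.elim0⟩
  rcases Nat.lt_or_ge t 2 with ht1' | ht2
  · -- t = 1
    obtain ⟨u, hu, v, hv, huv⟩ : ∃ u ∈ X₁, ∃ v ∈ X₂, G.Adj u v := by
      by_contra hcon
      push_neg at hcon
      exact hr12.2.2 hcon
    have : t = 1 := by omega
    subst this
    exact ⟨fun _ => u, fun _ => v,
      fun x y _ => Subsingleton.elim x y, fun x y _ => Subsingleton.elim x y,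
      fun i j => huv.ne, fun i j => huv⟩
  -- main case t ≥ 2
  have key : ∀ j, m + j ≤ Fintype.card V →
      HasKtt G t ∨ Conf G t (Pseq (m + j)).parts := by
    intro j
    induction j with
    | zero =>
      intro _
      exact conf_base t ht2 (Pseq m).disjoint h1 h2 h3 h4 h12 h13 h14 h23 h24 h34
        hr12 hr23 hr34 hr14 (hwidth m hm1 hmn) hpaths
    | succ j ih =>
      intro hj
      have hj' : m + j ≤ Fintype.card V := by omega
      rcases ih hj' with hK | hconf
      · exact Or.inl hK
      · have hmerge := hseq.2 (m + j) (by omega) (by omega)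
        have hstep := conf_step ht2 (Pseq (m + j + 1)) (Pseq (m + j)) hmerge
          (hwidth (m + j + 1) (by omega) (by omega)) hconf
        have harith : m + (j + 1) = m + j + 1 := by omega
        rw [harith]
        exact hstep
  rcases key (Fintype.card V - m) (by omega) with hK | hconf
  · exact hK
  · exfalso
    have hmn' : m + (Fintype.card V - m) = Fintype.card V := by omega
    rw [hmn'] at hconf
    obtain ⟨W0, W1, W2, W3, S1, S2, k, hm0, hm1', hm2', hm3', hnes,
      hr01, hrest⟩ := hconf
    rw [hseq.1] at hm0 hm1'
    obtain ⟨a, -, rfl⟩ := Finset.mem_image.mp hm0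
    obtain ⟨b, -, rfl⟩ := Finset.mem_image.mp hm1'
    by_cases hadj : G.Adj a b
    · apply hr01.2.1
      intro u hu v hv
      simp only [Finset.mem_singleton] at hu hv
      subst hu; subst hv
      exact hadj
    · apply hr01.2.2
      intro u hu v hv
      simp only [Finset.mem_singleton] at hu hv
      subst hu; subst hv
      exact hadj
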